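/- Let S∞ be the finitary symmetric group of ℕ and let ρ be an irreducible unitary representation of the product group S∞ × S∞ on a complex Hilbert space H. Then any two vectors v, w ∈ H satisfying ρ(g, g)v = v and ρ(g, g)w = w for all g ∈ S∞ are linearly dependent over ℂ; in other words, the subspace of vectors fixed by the diagonal subgroup diag(S∞) has dimension at most 1. (The pair (S∞ × S∞, diag(S∞)) is spherical.) -/

import Mathlib

open scoped InnerProductSpace

/-- The finitary symmetric group of a countable set: permutations with finite support. -/
def finitarySymm (Ω : Type*) : Subgroup (Equiv.Perm Ω) where
  carrier := {g | {x | g x ≠ x}.Finite}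
  one_mem' := by simp
  mul_mem' := by
    intro a b ha hb
    refine Set.Finite.subset (ha.union hb) fun x hx => ?_
    simp only [Set.mem_setOf_eq, Equiv.Perm.mul_apply] at hx
    simp only [Set.mem_union, Set.mem_setOf_eq]
    by_cases h : b x = x
    · exact Or.inl (by simpa [h] using hx)
    · exact Or.inr h
  inv_mem' := by
    intro a ha
    refine Set.Finite.subset ha fun x hx => ?_
    simp only [Set.mem_setOf_eq] at hx ⊢
    intro h
    apply hx
    nth_rewrite 1 [← h]
    exact Equiv.symm_apply_apply a x

/-- `S∞`, the finitary symmetric group of `ℕ`. -/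
abbrev SInf := ↥(finitarySymm ℕ)

/-- Irreducibility of a unitary representation: the space is nonzero and the only
invariant closed subspaces are `⊥` and `⊤`. -/
def IsIrreducibleRep {G : Type*} [Group G] {H : Type*} [NormedAddCommGroup H]
    [InnerProductSpace ℂ H] [CompleteSpace H] (ρ : G →* unitary (H →L[ℂ] H)) : Prop :=
  (∃ v : H, v ≠ 0) ∧
    ∀ V : Submodule ℂ H, IsClosed (V : Set H) →
      (∀ (g : G), ∀ v ∈ V, (ρ g : H →L[ℂ] H) v ∈ V) → V = ⊥ ∨ V = ⊤


namespace SphericalAux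

variable {H : Type*} [NormedAddCommGroup H] [InnerProductSpace ℂ H] [CompleteSpace H]

lemma commute_cfc_aux (A X : H →L[ℂ] H) (hA : IsSelfAdjoint A) (hX : Commute X A)
    (f : ℝ → ℝ) (hf : Continuous f) : Commute X (cfc f A) := by
  have key : ∀ φ : C(spectrum ℝ A, ℝ), Commute X (cfcHom hA φ) := by
    have hSclosed : IsClosed {ψ : C(spectrum ℝ A, ℝ) | Commute X (cfcHom hA ψ)} := by
      have hc : Continuous (cfcHom hA (R := ℝ)) := (cfcHom_isClosedEmbedding hA).continuous
      have h1 : Continuous fun ψ : C(spectrum ℝ A, ℝ) =>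
          X * cfcHom hA ψ - cfcHom hA ψ * X :=
        (continuous_const.mul hc).sub (hc.mul continuous_const)
      have heq : {ψ : C(spectrum ℝ A, ℝ) | Commute X (cfcHom hA ψ)}
          = (fun ψ : C(spectrum ℝ A, ℝ) => X * cfcHom hA ψ - cfcHom hA ψ * X) ⁻¹' {0} := by
        ext ψ
        simp only [Set.mem_setOf_eq, Set.mem_preimage, Set.mem_singleton_iff, sub_eq_zero]
        exact Iff.rfl
      rw [heq]
      exact IsClosed.preimage h1 isClosed_singleton
    set gen : C(spectrum ℝ A, ℝ) := ContinuousMap.restrict (spectrum ℝ A) (ContinuousMap.id ℝ)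
      with hgen_def
    have hmem : ∀ ψ ∈ Algebra.adjoin ℝ {gen}, Commute X (cfcHom hA ψ) := by
      intro ψ hψ
      induction hψ using Algebra.adjoin_induction with
      | mem x hx =>
        rcases hx with rfl
        show Commute X _
        rw [hgen_def, cfcHom_id hA]
        exact hX
      | algebraMap r =>
        rw [AlgHomClass.commutes]
        exact (Algebra.commutes r X).symm
      | add x y _ _ h1 h2 => rw [map_add]; exact h1.add_right h2
      | mul x y _ _ h1 h2 => rw [map_mul]; exact h1.mul_right h2
    have hsep : (Algebra.adjoin ℝ {gen}).SeparatesPoints := by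
      intro x y hxy
      refine ⟨_, ⟨gen, Algebra.self_mem_adjoin_singleton ℝ _, rfl⟩, ?_⟩
      simpa [hgen_def, ContinuousMap.restrict] using fun h => hxy (Subtype.ext h)
    have htop := ContinuousMap.subalgebra_topologicalClosure_eq_top_of_separatesPoints _ hsep
    intro φ
    have hφ : φ ∈ closure ((Algebra.adjoin ℝ {gen} : Subalgebra ℝ C(spectrum ℝ A, ℝ)) :
        Set C(spectrum ℝ A, ℝ)) := by
      have h2 : φ ∈ ((Algebra.adjoin ℝ {gen}).topologicalClosure :
          Set C(spectrum ℝ A, ℝ)) := by rw [htop]; trivial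
      rwa [Subalgebra.topologicalClosure_coe] at h2
    exact closure_minimal hmem hSclosed hφ
  rw [cfc_apply f A hA (hf.continuousOn)]
  exact key _

lemma schur_selfadjoint {Γ : Type*} [Group Γ] (ρ : Γ →* unitary (H →L[ℂ] H))
    (hirr : IsIrreducibleRep ρ) (A : H →L[ℂ] H) (hA : IsSelfAdjoint A)
    (hcomm : ∀ p : Γ, Commute ((ρ p : H →L[ℂ] H)) A) :
    ∃ r : ℝ, A = algebraMap ℝ (H →L[ℂ] H) r := by
  obtain ⟨v₀, hv₀⟩ := hirr.1
  haveI : Nontrivial H := ⟨v₀, 0, hv₀⟩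
  haveI : Nontrivial (H →L[ℂ] H) := ⟨1, 0, fun h => hv₀ (by
    have := congrArg (fun T : H →L[ℂ] H => T v₀) h
    simpa using this)⟩
  obtain ⟨r, hr⟩ : (spectrum ℝ A).Nonempty := CFC.spectrum_nonempty ℝ A hA
  have hsingle : ∀ b ∈ spectrum ℝ A, b = r := by
    by_contra hcon
    push_neg at hcon
    obtain ⟨b, hb, hbr⟩ := hcon
    obtain ⟨x, y, hx, hy, hlt⟩ : ∃ x y : ℝ, x ∈ spectrum ℝ A ∧ y ∈ spectrum ℝ A ∧ x < y := by
      rcases lt_or_gt_of_ne hbr with h | h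
      · exact ⟨b, r, hb, hr, h⟩
      · exact ⟨r, b, hr, hb, h⟩
    set δ : ℝ := (y - x) / 3 with hδdef
    have hδ : 0 < δ := by rw [hδdef]; linarith
    set f : ℝ → ℝ := fun t => max (1 - |t - x| / δ) 0 with hfdef
    set g : ℝ → ℝ := fun t => max (1 - |t - y| / δ) 0 with hgdef
    have hfc : Continuous f :=
      Continuous.max (continuous_const.sub
        (((continuous_id.sub continuous_const).abs).div_const δ)) continuous_const
    have hgc : Continuous g :=
      Continuous.max (continuous_const.sub
        (((continuous_id.sub continuous_const).abs).div_const δ)) continuous_const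
    have hfg : ∀ t, g t * f t = 0 := by
      intro t
      rcases le_or_gt δ (|t - x|) with h1 | h1
      · have hf0 : f t = 0 := by
          rw [hfdef]
          simp only [max_eq_right_iff]
          have : (1:ℝ) ≤ |t - x| / δ := (one_le_div hδ).2 h1
          linarith
        rw [hf0, mul_zero]
      · have h2 : δ ≤ |t - y| := by
          have h3 : |y - x| ≤ |t - y| + |t - x| := by
            calc |y - x| = |(y - t) + (t - x)| := by ring_nf
            _ ≤ |y - t| + |t - x| := abs_add_le _ _
            _ = |t - y| + |t - x| := by rw [abs_sub_comm t y]
          have h4 : |y - x| = 3 * δ := by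
            rw [abs_of_pos (by linarith : (0:ℝ) < y - x), hδdef]; ring
          linarith
        have hg0 : g t = 0 := by
          rw [hgdef]
          simp only [max_eq_right_iff]
          have : (1:ℝ) ≤ |t - y| / δ := (one_le_div hδ).2 h2
          linarith
        rw [hg0, zero_mul]
    set F := cfc f A with hFdef
    set Gop := cfc g A with hGdef
    have hGF : Gop * F = 0 := by
      rw [hGdef, hFdef, ← cfc_mul g f A hgc.continuousOn hfc.continuousOn]
      have hz : (fun t => g t * f t) = fun _ : ℝ => (0:ℝ) := funext hfg
      rw [hz]
      exact (cfc_const 0 A hA).trans (map_zero _)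
    have hFne : F ≠ 0 := by
      intro h0
      have h1 : ‖f x‖ ≤ ‖F‖ := norm_apply_le_norm_cfc f A hx hfc.continuousOn hA
      rw [h0, norm_zero] at h1
      have hfx : f x = 1 := by rw [hfdef]; simp
      rw [hfx] at h1; norm_num at h1
    have hGne : Gop ≠ 0 := by
      intro h0
      have h1 : ‖g y‖ ≤ ‖Gop‖ := norm_apply_le_norm_cfc g A hy hgc.continuousOn hA
      rw [h0, norm_zero] at h1
      have hgy : g y = 1 := by rw [hgdef]; simp
      rw [hgy] at h1; norm_num at h1
    have hGcomm : ∀ p : Γ, Commute ((ρ p : H →L[ℂ] H)) Gop :=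
      fun p => commute_cfc_aux A _ hA (hcomm p) g hgc
    have hker := hirr.2 (LinearMap.ker (Gop : H →ₗ[ℂ] H)) (ContinuousLinearMap.isClosed_ker Gop) (by
      intro p v hv
      rw [LinearMap.mem_ker] at hv ⊢
      simp only [ContinuousLinearMap.coe_coe] at hv ⊢
      have := congrArg (fun T : H →L[ℂ] H => T v) (hGcomm p).symm
      simp only [ContinuousLinearMap.mul_apply] at this
      rw [← ContinuousLinearMap.comp_apply, ← ContinuousLinearMap.mul_def]
      rw [(hGcomm p).symm.eq]
      simp [ContinuousLinearMap.mul_apply, hv])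
    rcases hker with hbot | htopp
    · obtain ⟨u, hu⟩ : ∃ u, F u ≠ 0 := by
        by_contra hall
        push_neg at hall
        exact hFne (ContinuousLinearMap.ext fun u => by rw [hall u]; simp)
      have : F u ∈ LinearMap.ker (Gop : H →ₗ[ℂ] H) := by
        rw [LinearMap.mem_ker]
        have := congrArg (fun T : H →L[ℂ] H => T u) hGF
        simpa [ContinuousLinearMap.mul_apply] using this
      rw [hbot] at this
      exact hu (by simpa using this)
    · apply hGne
      have : ∀ u : H, Gop u = 0 := by
        intro u
        have : u ∈ LinearMap.ker (Gop : H →ₗ[ℂ] H) := by rw [htopp]; trivial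
        exact this
      exact ContinuousLinearMap.ext fun u => by rw [this u]; simp
  refine ⟨r, ?_⟩
  calc A = cfc (id : ℝ → ℝ) A := (cfc_id ℝ A hA).symm
  _ = cfc (fun _ : ℝ => r) A := cfc_congr fun b hb => hsingle b hb
  _ = algebraMap ℝ (H →L[ℂ] H) r := cfc_const r A hA

lemma schur_full {Γ : Type*} [Group Γ] (ρ : Γ →* unitary (H →L[ℂ] H))
    (hirr : IsIrreducibleRep ρ) (T : H →L[ℂ] H)
    (hT : ∀ p : Γ, Commute ((ρ p : H →L[ℂ] H)) T) :
    ∃ c : ℂ, T = c • (1 : H →L[ℂ] H) := by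
  have hTstar : ∀ p : Γ, Commute ((ρ p : H →L[ℂ] H)) (star T) := by
    intro p
    have h := (hT p⁻¹).star_star
    have hcoe : star ((ρ p⁻¹ : H →L[ℂ] H)) = (ρ p : H →L[ℂ] H) := by
      rw [← Unitary.coe_star, Unitary.star_eq_inv, ← map_inv, inv_inv]
    rwa [hcoe] at h
  set A : H →L[ℂ] H := (2⁻¹ : ℂ) • (T + star T) with hAdef
  set B : H →L[ℂ] H := (2⁻¹ : ℂ) • (Complex.I • (star T - T)) with hBdef
  have hhalf : star (2⁻¹ : ℂ) = (2⁻¹ : ℂ) := by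
    simp [Complex.star_def]
  have hA : IsSelfAdjoint A := by
    rw [IsSelfAdjoint, hAdef, star_smul, hhalf, star_add, star_star, add_comm]
  have hB : IsSelfAdjoint B := by
    rw [IsSelfAdjoint, hBdef, star_smul, hhalf, star_smul, star_sub, star_star]
    congr 1
    rw [Complex.star_def, Complex.conj_I, neg_smul, ← smul_neg, neg_sub]
  have hAcomm : ∀ p : Γ, Commute ((ρ p : H →L[ℂ] H)) A :=
    fun p => Commute.smul_right ((hT p).add_right (hTstar p)) _
  have hBcomm : ∀ p : Γ, Commute ((ρ p : H →L[ℂ] H)) B :=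
    fun p => Commute.smul_right (Commute.smul_right ((hTstar p).sub_right (hT p)) _) _
  obtain ⟨a, ha⟩ := schur_selfadjoint ρ hirr A hA hAcomm
  obtain ⟨b, hb⟩ := schur_selfadjoint ρ hirr B hB hBcomm
  refine ⟨(a : ℂ) + Complex.I * (b : ℂ), ?_⟩
  have hTAB : T = A + Complex.I • B := by
    rw [hAdef, hBdef]
    rw [smul_comm Complex.I ((2:ℂ)⁻¹), smul_smul Complex.I Complex.I, Complex.I_mul_I,
      neg_one_smul, neg_sub]
    module
  have ha' : A = (a : ℂ) • (1 : H →L[ℂ] H) := by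
    rw [ha, Algebra.algebraMap_eq_smul_one, ← Complex.coe_smul]
  have hb' : B = (b : ℂ) • (1 : H →L[ℂ] H) := by
    rw [hb, Algebra.algebraMap_eq_smul_one, ← Complex.coe_smul]
  rw [hTAB, ha', hb', smul_smul, add_smul]


def swapFun (n m : ℕ) : ℕ → ℕ := fun x =>
  if x < n then x + m else if x < m then x else if x < m + n then x - m else x

lemma swapFun_involutive (n m : ℕ) (h : n ≤ m) : Function.Involutive (swapFun n m) := by
  intro x
  unfold swapFun
  split_ifs <;> omega

def blockSwap (n k : ℕ) : SInf :=
  ⟨(swapFun_involutive n (n + k) (Nat.le_add_right n k)).toPerm _, by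
    apply Set.Finite.subset (Set.finite_Iio ((n + k) + n))
    intro x hx
    simp only [Set.mem_setOf_eq, Function.Involutive.coe_toPerm] at hx
    simp only [Set.mem_Iio]
    by_contra hge
    push_neg at hge
    apply hx
    unfold swapFun
    have h1 : ¬ x < n := by omega
    have h2 : ¬ x < n + k := by omega
    have h3 : ¬ x < (n + k) + n := by omega
    simp [h1, h2, h3]⟩

lemma blockSwap_apply (n k x : ℕ) : ((blockSwap n k).val : Equiv.Perm ℕ) x = swapFun n (n + k) x :=
  congrFun (Function.Involutive.coe_toPerm
    (swapFun_involutive n (n + k) (Nat.le_add_right n k))) x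

lemma blockSwap_inv_apply (n k x : ℕ) :
    ((blockSwap n k).val)⁻¹ x = swapFun n (n + k) x := by
  have h : ((blockSwap n k).val)⁻¹ = (blockSwap n k).val := by
    rw [Equiv.Perm.inv_def]
    exact Function.Involutive.toPerm_symm
      (swapFun_involutive n (n + k) (Nat.le_add_right n k))
  rw [h]
  exact blockSwap_apply n k x

lemma bound_of_finitary (a : SInf) : ∃ N : ℕ, ∀ x, N ≤ x → (a.val : Equiv.Perm ℕ) x = x := by
  obtain ⟨b, hb⟩ := (a.2 : {x | (a.val : Equiv.Perm ℕ) x ≠ x}.Finite).bddAbove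
  refine ⟨b + 1, fun x hx => ?_⟩
  by_contra h
  have hmem : x ∈ {x | (a.val : Equiv.Perm ℕ) x ≠ x} := h
  have := hb hmem
  omega

theorem exists_conj_seq (g : SInf) : ∃ gs : ℕ → SInf,
    (∀ k, ∃ t : SInf, gs k = t * g * t⁻¹) ∧
    ∀ a : SInf, ∀ᶠ k in Filter.atTop, Commute (gs k) a := by
  obtain ⟨n, hn⟩ := bound_of_finitary g
  refine ⟨fun k => blockSwap n k * g * (blockSwap n k)⁻¹,
    fun k => ⟨blockSwap n k, rfl⟩, ?_⟩
  intro a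
  obtain ⟨N, hN⟩ := bound_of_finitary a
  filter_upwards [Filter.eventually_ge_atTop N] with k hk
  -- the conjugate fixes everything outside [n+k, n+k+n)
  have hfix : ∀ x : ℕ, x < n + k ∨ n + k + n ≤ x →
      ((blockSwap n k * g * (blockSwap n k)⁻¹ : SInf).val) x = x := by
    intro x hx
    have happ : ((blockSwap n k * g * (blockSwap n k)⁻¹ : SInf).val) x
        = (blockSwap n k).val (g.val (((blockSwap n k).val)⁻¹ x)) := by
      simp [Equiv.Perm.mul_apply]
    rw [happ, blockSwap_inv_apply]
    rcases Nat.lt_or_ge x n with h1 | h1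
    · have e1 : swapFun n (n + k) x = x + (n + k) := by
        unfold swapFun; rw [if_pos h1]
      rw [e1, hn _ (by omega), blockSwap_apply]
      unfold swapFun
      split_ifs <;> omega
    · have e1 : swapFun n (n + k) x = x := by
        unfold swapFun; split_ifs <;> omega
      rw [e1, hn _ (by omega), blockSwap_apply, e1]
  have hdisj : Equiv.Perm.Disjoint ((blockSwap n k * g * (blockSwap n k)⁻¹ : SInf).val) a.val := by
    intro x
    rcases Nat.lt_or_ge x (n + k) with h | h
    · exact Or.inl (hfix x (Or.inl h))
    · exact Or.inr (hN x (by omega))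
  have hc := hdisj.commute
  exact Subtype.ext (by simpa using hc.eq)


variable {H : Type*} [NormedAddCommGroup H] [InnerProductSpace ℂ H] [CompleteSpace H]

variable {Γ : Type*} [Group Γ] (ρ : Γ →* unitary (H →L[ℂ] H))

lemma U_mul (p q : Γ) (x : H) :
    (ρ (p * q) : H →L[ℂ] H) x = (ρ p : H →L[ℂ] H) ((ρ q : H →L[ℂ] H) x) := by
  rw [map_mul]
  rfl

lemma U_inner (p : Γ) (x y : H) :
    ⟪(ρ p : H →L[ℂ] H) x, (ρ p : H →L[ℂ] H) y⟫_ℂ = ⟪x, y⟫_ℂ := by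
  have h : star (ρ p : H →L[ℂ] H) * (ρ p : H →L[ℂ] H) = 1 :=
    (Unitary.mem_iff.mp (ρ p).2).1
  have h2 : ContinuousLinearMap.adjoint (ρ p : H →L[ℂ] H) ((ρ p : H →L[ℂ] H) x) = x := by
    have e : ContinuousLinearMap.adjoint (ρ p : H →L[ℂ] H) ((ρ p : H →L[ℂ] H) x)
        = ((star (ρ p : H →L[ℂ] H)) * (ρ p : H →L[ℂ] H)) x := by
      rw [ContinuousLinearMap.star_eq_adjoint]; rfl
    rw [e, h]; rfl
  have h3 := ContinuousLinearMap.adjoint_inner_left (ρ p : H →L[ℂ] H) y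
    ((ρ p : H →L[ℂ] H) x)
  rw [h2] at h3
  exact h3.symm

lemma U_norm (p : Γ) (x : H) : ‖(ρ p : H →L[ℂ] H) x‖ = ‖x‖ := by
  have h := U_inner ρ p x x
  rw [@norm_eq_sqrt_re_inner ℂ _ _ _ _ ((ρ p : H →L[ℂ] H) x), @norm_eq_sqrt_re_inner ℂ _ _ _ _ x, h]

lemma U_inner_left (p : Γ) (x y : H) :
    ⟪y, (ρ p : H →L[ℂ] H) x⟫_ℂ = ⟪(ρ p⁻¹ : H →L[ℂ] H) y, x⟫_ℂ := by
  have h1 : (ρ p : H →L[ℂ] H) ((ρ p⁻¹ : H →L[ℂ] H) y) = y := by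
    rw [← U_mul, mul_inv_cancel, map_one]
    rfl
  calc ⟪y, (ρ p : H →L[ℂ] H) x⟫_ℂ
      = ⟪(ρ p : H →L[ℂ] H) ((ρ p⁻¹ : H →L[ℂ] H) y), (ρ p : H →L[ℂ] H) x⟫_ℂ := by rw [h1]
    _ = ⟪(ρ p⁻¹ : H →L[ℂ] H) y, x⟫_ℂ := U_inner ρ p _ x


variable (ρ : SInf × SInf →* unitary (H →L[ℂ] H))

theorem exists_intertwiner (g : SInf) :
    ∃ T : H →L[ℂ] H, (∀ p : SInf × SInf, Commute ((ρ p : H →L[ℂ] H)) T) ∧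
      ∀ ξ η : H, (∀ s : SInf, (ρ (s, s) : H →L[ℂ] H) ξ = ξ) →
        (∀ s : SInf, (ρ (s, s) : H →L[ℂ] H) η = η) →
        ⟪η, T ξ⟫_ℂ = ⟪η, (ρ (g, 1) : H →L[ℂ] H) ξ⟫_ℂ := by
  obtain ⟨gs, hconj, hcommev⟩ := exists_conj_seq g
  set 𝒰 : Ultrafilter ℕ := Ultrafilter.of Filter.atTop with h𝒰def
  have h𝒰 : (𝒰 : Filter ℕ) ≤ Filter.atTop := Ultrafilter.of_le _
  set u : H → H → ℕ → ℂ :=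
    fun x y k => ⟪y, (ρ (gs k, 1) : H →L[ℂ] H) x⟫_ℂ with hudef
  have hubound : ∀ x y k, ‖u x y k‖ ≤ ‖y‖ * ‖x‖ := by
    intro x y k
    calc ‖u x y k‖ ≤ ‖y‖ * ‖(ρ (gs k, 1) : H →L[ℂ] H) x‖ := norm_inner_le_norm _ _
    _ = ‖y‖ * ‖x‖ := by rw [U_norm]
  have hlim : ∀ x y : H, ∃ c : ℂ, Filter.Tendsto (u x y) ↑𝒰 (nhds c) := by
    intro x y
    have hmaps : (Ultrafilter.map (u x y) 𝒰 : Filter ℂ)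
        ≤ Filter.principal (Metric.closedBall 0 (‖y‖ * ‖x‖)) := by
      rw [Filter.le_principal_iff]
      exact Filter.mem_map.2 (Filter.Eventually.of_forall fun k =>
        mem_closedBall_zero_iff.2 (hubound x y k))
    obtain ⟨c, _, hle⟩ := (isCompact_closedBall (0:ℂ) (‖y‖ * ‖x‖)).ultrafilter_le_nhds
      (Ultrafilter.map (u x y) 𝒰) hmaps
    exact ⟨c, hle⟩
  choose F hF using hlim
  have huniq : ∀ {x y : H} {c : ℂ}, Filter.Tendsto (u x y) ↑𝒰 (nhds c) → F x y = c :=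
    fun h => tendsto_nhds_unique (hF _ _) h
  have hbound : ∀ x y, ‖F x y‖ ≤ ‖y‖ * ‖x‖ := fun x y =>
    le_of_tendsto (hF x y).norm (Filter.Eventually.of_forall fun k => hubound x y k)
  have haddl : ∀ x y y', F x (y + y') = F x y + F x y' := by
    intro x y y'
    refine huniq ?_
    have h := (hF x y).add (hF x y')
    refine h.congr fun k => ?_
    simp only [hudef, inner_add_left]
  have hsmull : ∀ (c : ℂ) x y, F x (c • y) = (starRingEnd ℂ) c * F x y := by
    intro c x y
    refine huniq ?_
    have h := (hF x y).const_mul ((starRingEnd ℂ) c)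
    refine h.congr fun k => ?_
    simp only [hudef, inner_smul_left]
  have haddr : ∀ x x' y, F (x + x') y = F x y + F x' y := by
    intro x x' y
    refine huniq ?_
    have h := (hF x y).add (hF x' y)
    refine h.congr fun k => ?_
    simp only [hudef, ← inner_add_right, map_add]
  have hsmulr : ∀ (c : ℂ) x y, F (c • x) y = c * F x y := by
    intro c x y
    refine huniq ?_
    have h := (hF x y).const_mul c
    refine h.congr fun k => ?_
    simp only [hudef, ← inner_smul_right, map_smul]
  -- the functional y ↦ conj (F x y) and the resulting vector
  have hφbound : ∀ x (y : H), ‖(starRingEnd ℂ) (F x y)‖ ≤ ‖x‖ * ‖y‖ := by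
    intro x y
    rw [RCLike.norm_conj]
    calc ‖F x y‖ ≤ ‖y‖ * ‖x‖ := hbound x y
    _ = ‖x‖ * ‖y‖ := mul_comm _ _
  set φ : H → (H →L[ℂ] ℂ) := fun x => LinearMap.mkContinuous
    { toFun := fun y => (starRingEnd ℂ) (F x y)
      map_add' := fun y y' => by
        show (starRingEnd ℂ) (F x (y + y')) = _
        rw [haddl]; exact map_add _ _ _
      map_smul' := fun c y => by
        show (starRingEnd ℂ) (F x (c • y)) = (RingHom.id ℂ) c • (starRingEnd ℂ) (F x y)
        rw [hsmull]
        simp only [map_mul, RingHom.id_apply, starRingEnd_self_apply, smul_eq_mul] }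
    ‖x‖ (hφbound x) with hφdef
  set Tf : H → H := fun x => (InnerProductSpace.toDual ℂ H).symm (φ x) with hTfdef
  have hTf : ∀ x y, ⟪y, Tf x⟫_ℂ = F x y := by
    intro x y
    have h1 : ⟪Tf x, y⟫_ℂ = φ x y := by
      rw [hTfdef]
      have := InnerProductSpace.toDual_apply_apply (𝕜 := ℂ) (E := H)
        (x := (InnerProductSpace.toDual ℂ H).symm (φ x)) (y := y)
      rw [← this, LinearIsometryEquiv.apply_symm_apply]
    have h2 : φ x y = (starRingEnd ℂ) (F x y) := rfl
    calc ⟪y, Tf x⟫_ℂ = (starRingEnd ℂ) ⟪Tf x, y⟫_ℂ := (inner_conj_symm _ _).symm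
    _ = (starRingEnd ℂ) ((starRingEnd ℂ) (F x y)) := by rw [h1, h2]
    _ = F x y := by rw [starRingEnd_self_apply]
  have hTfnorm : ∀ x, ‖Tf x‖ ≤ 1 * ‖x‖ := by
    intro x
    rw [one_mul, hTfdef]
    calc ‖(InnerProductSpace.toDual ℂ H).symm (φ x)‖ = ‖φ x‖ :=
      LinearIsometryEquiv.norm_map _ _
    _ ≤ ‖x‖ := LinearMap.mkContinuous_norm_le _ (norm_nonneg x) _
  set T : H →L[ℂ] H := LinearMap.mkContinuous
    { toFun := Tf
      map_add' := fun x x' => ext_inner_left ℂ fun y => by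
        rw [hTf, inner_add_right, hTf, hTf, haddr]
      map_smul' := fun c x => ext_inner_left ℂ fun y => by
        simp only [RingHom.id_apply]
        rw [hTf, inner_smul_right, hTf, hsmulr] }
    1 hTfnorm with hTdef
  have hTapp : ∀ x y, ⟪y, T x⟫_ℂ = F x y := fun x y => hTf x y
  refine ⟨T, ?_, ?_⟩
  · -- commutation
    intro p
    have key : ∀ x y : H, ⟪y, (ρ p : H →L[ℂ] H) (T x)⟫_ℂ = ⟪y, T ((ρ p : H →L[ℂ] H) x)⟫_ℂ := by
      intro x y
      have h1 : ⟪y, (ρ p : H →L[ℂ] H) (T x)⟫_ℂ = F x ((ρ p⁻¹ : H →L[ℂ] H) y) := by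
        rw [U_inner_left, hTapp]
      have h2 : ⟪y, T ((ρ p : H →L[ℂ] H) x)⟫_ℂ = F ((ρ p : H →L[ℂ] H) x) y := hTapp _ y
      rw [h1, h2]
      -- both are 𝒰-limits of eventually equal sequences
      have t1 : Filter.Tendsto (fun k => ⟪y, (ρ (p * (gs k, 1)) : H →L[ℂ] H) x⟫_ℂ)
          ↑𝒰 (nhds (F x ((ρ p⁻¹ : H →L[ℂ] H) y))) := by
        refine (hF x ((ρ p⁻¹ : H →L[ℂ] H) y)).congr fun k => ?_
        simp only [hudef]
        rw [← U_inner_left, U_mul]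
      have t2 : Filter.Tendsto (fun k => ⟪y, (ρ ((gs k, 1) * p) : H →L[ℂ] H) x⟫_ℂ)
          ↑𝒰 (nhds (F ((ρ p : H →L[ℂ] H) x) y)) := by
        refine (hF ((ρ p : H →L[ℂ] H) x) y).congr fun k => ?_
        simp only [hudef]
        rw [U_mul]
      have hev : ∀ᶠ k in (𝒰 : Filter ℕ),
          (fun k => ⟪y, (ρ (p * (gs k, 1)) : H →L[ℂ] H) x⟫_ℂ) k
          = (fun k => ⟪y, (ρ ((gs k, 1) * p) : H →L[ℂ] H) x⟫_ℂ) k := by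
        apply Filter.Eventually.filter_mono h𝒰
        filter_upwards [hcommev p.1] with k hk
        have : p * (gs k, 1) = (gs k, 1) * p := by
          have h1 : p.1 * gs k = gs k * p.1 := hk.symm
          ext
          · simp [h1]
          · simp
        rw [this]
      exact tendsto_nhds_unique (t1.congr' hev) t2
    have : (ρ p : H →L[ℂ] H) ∘L T = T ∘L (ρ p : H →L[ℂ] H) := by
      apply ContinuousLinearMap.ext
      intro x
      exact ext_inner_left ℂ fun y => key x y
    exact this
  · -- fixed vectors
    intro ξ η hξ hη
    have hconst : ∀ k, u ξ η k = ⟪η, (ρ (g, 1) : H →L[ℂ] H) ξ⟫_ℂ := by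
      intro k
      obtain ⟨t, ht⟩ := hconj k
      have hprod : ((gs k, (1:SInf)) : SInf × SInf) = (t, t) * (g, 1) * ((t, t))⁻¹ := by
        rw [ht]
        ext
        · simp [mul_assoc]
        · simp
      have hinv : (((t, t) : SInf × SInf))⁻¹ = ((t⁻¹, t⁻¹) : SInf × SInf) := rfl
      calc u ξ η k = ⟪η, (ρ ((t, t) * (g, 1) * ((t, t))⁻¹) : H →L[ℂ] H) ξ⟫_ℂ := by
            simp only [hudef]; rw [hprod]
      _ = ⟪η, (ρ ((t, t) : SInf × SInf) : H →L[ℂ] H)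
            ((ρ ((g, 1) : SInf × SInf) : H →L[ℂ] H)
              ((ρ (((t, t) : SInf × SInf))⁻¹ : H →L[ℂ] H) ξ))⟫_ℂ := by
            rw [U_mul, U_mul]
      _ = ⟪η, (ρ ((t, t) : SInf × SInf) : H →L[ℂ] H)
            ((ρ ((g, 1) : SInf × SInf) : H →L[ℂ] H) ξ)⟫_ℂ := by
            rw [hinv, hξ t⁻¹]
      _ = ⟪η, (ρ (g, 1) : H →L[ℂ] H) ξ⟫_ℂ := by
            nth_rewrite 1 [← hη t]
            rw [U_inner]
    have : F ξ η = ⟪η, (ρ (g, 1) : H →L[ℂ] H) ξ⟫_ℂ := by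
      refine huniq ?_
      have : u ξ η = fun _ => ⟪η, (ρ (g, 1) : H →L[ℂ] H) ξ⟫_ℂ := funext hconst
      rw [this]
      exact tendsto_const_nhds
    rw [hTapp, this]

end SphericalAux

/-- **Sphericity of the pair `(S∞ × S∞, diag S∞)`**: in any irreducible unitary
representation of `S∞ × S∞`, the subspace of vectors fixed by the diagonal subgroup
has dimension at most one. -/

theorem dim_diag_fixed_le_one {H : Type*} [NormedAddCommGroup H] [InnerProductSpace ℂ H]
    [CompleteSpace H] (ρ : SInf × SInf →* unitary (H →L[ℂ] H))
    (hirr : IsIrreducibleRep ρ) (v w : H)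
    (hv : ∀ g : SInf, (ρ (g, g) : H →L[ℂ] H) v = v)
    (hw : ∀ g : SInf, (ρ (g, g) : H →L[ℂ] H) w = w) :
    ∃ a b : ℂ, (a ≠ 0 ∨ b ≠ 0) ∧ a • v + b • w = 0 := by
  classical
  by_cases hv0 : v = 0
  · exact ⟨1, 0, Or.inl one_ne_zero, by simp [hv0]⟩
  · set c : ℂ := ⟪v, w⟫_ℂ / ⟪v, v⟫_ℂ with hcdef
    set η : H := w - c • v with hηdef
    have hηfix : ∀ s : SInf, (ρ (s, s) : H →L[ℂ] H) η = η := by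
      intro s
      rw [hηdef, map_sub, map_smul, hv, hw]
    have hinner_v : ⟪v, v⟫_ℂ ≠ 0 := inner_self_ne_zero.2 hv0
    have hvη : ⟪v, η⟫_ℂ = 0 := by
      rw [hηdef, inner_sub_right, inner_smul_right, hcdef,
        div_mul_cancel₀ _ hinner_v, sub_self]
    have hη0 : η = 0 := by
      by_contra hη
      have hkey : ∀ p : SInf × SInf, ⟪η, (ρ p : H →L[ℂ] H) v⟫_ℂ = 0 := by
        intro p
        obtain ⟨a, b⟩ := p
        have hsplit : ((a, b) : SInf × SInf) = (a * b⁻¹, 1) * (b, b) := by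
          ext <;> simp
        obtain ⟨T, hTcomm, hTfix⟩ := SphericalAux.exists_intertwiner ρ (a * b⁻¹)
        obtain ⟨c', hc'⟩ := SphericalAux.schur_full ρ hirr T hTcomm
        have h1 : (ρ ((a, b) : SInf × SInf) : H →L[ℂ] H) v
            = (ρ ((a * b⁻¹, 1) : SInf × SInf) : H →L[ℂ] H) v := by
          rw [hsplit, SphericalAux.U_mul, hv b]
        have hηv : ⟪η, v⟫_ℂ = 0 := by
          rw [← inner_conj_symm, hvη, map_zero]
        rw [h1, ← hTfix v η hv hηfix, hc']
        simp only [ContinuousLinearMap.smul_apply, ContinuousLinearMap.one_apply,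
          inner_smul_right]
        rw [hηv, mul_zero]
      set S : Set H := Set.range (fun p : SInf × SInf => (ρ p : H →L[ℂ] H) v) with hSdef
      set V : Submodule ℂ H := (Submodule.span ℂ S).topologicalClosure with hVdef
      have hVclosed : IsClosed (V : Set H) := Submodule.isClosed_topologicalClosure _
      have hVinv : ∀ p : SInf × SInf, ∀ z ∈ V, (ρ p : H →L[ℂ] H) z ∈ V := by
        intro p z hz
        have hmap : Set.MapsTo ((ρ p : H →L[ℂ] H))
            (Submodule.span ℂ S : Set H) (Submodule.span ℂ S : Set H) := by
          intro z' hz'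
          have hz'' : z' ∈ Submodule.span ℂ S := hz'
          clear hz'
          induction hz'' using Submodule.span_induction with
          | mem x hx =>
            obtain ⟨q, rfl⟩ := hx
            exact Submodule.subset_span ⟨p * q, SphericalAux.U_mul ρ p q v⟩
          | zero => simpa using Submodule.zero_mem (Submodule.span ℂ S)
          | add x y _ _ h1 h2 =>
            rw [map_add]
            exact Submodule.add_mem _ h1 h2
          | smul cc x _ h1 =>
            rw [map_smul]
            exact Submodule.smul_mem _ cc h1
        have hz' : z ∈ closure (Submodule.span ℂ S : Set H) := by
          rw [hVdef] at hz
          exact hz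
        have := map_mem_closure (ρ p : H →L[ℂ] H).continuous hz' hmap
        rw [hVdef]
        exact this
      have hvV : v ∈ V := by
        have h1 : (ρ (1 : SInf × SInf) : H →L[ℂ] H) v = v := by
          rw [map_one]
          rfl
        exact Submodule.le_topologicalClosure _
          (Submodule.subset_span ⟨(1 : SInf × SInf), h1⟩)
      have hVne : V ≠ ⊥ := fun h => hv0 (by rw [h] at hvV; simpa using hvV)
      have hVtop : V = ⊤ := (hirr.2 V hVclosed hVinv).resolve_left hVne
      have hle : V ≤ LinearMap.ker ((innerSL ℂ η : H →L[ℂ] ℂ) : H →ₗ[ℂ] ℂ) := by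
        rw [hVdef]
        apply Submodule.topologicalClosure_minimal
        · rw [Submodule.span_le]
          intro z hz
          obtain ⟨p, rfl⟩ := hz
          have : innerSL ℂ η ((ρ p : H →L[ℂ] H) v) = 0 := by
            rw [innerSL_apply_apply]
            exact hkey p
          exact this
        · exact ContinuousLinearMap.isClosed_ker _
      have hηmem : η ∈ LinearMap.ker ((innerSL ℂ η : H →L[ℂ] ℂ) : H →ₗ[ℂ] ℂ) := hle (hVtop ▸ Submodule.mem_top)
      have : ⟪η, η⟫_ℂ = 0 := hηmem
      exact hη (inner_self_eq_zero.mp this)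
    refine ⟨c, -1, Or.inr (by norm_num), ?_⟩
    have h2 : c • v - w = -η := by rw [hηdef, neg_sub]
    rw [neg_one_smul, ← sub_eq_add_neg, h2, hη0, neg_zero]
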